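/- Trotter product convergence for bounded generators: if A(s) and B(s) are bounded operator-valued, piecewise continuous in s on [0,t], then the time-ordered product ∏_{m=1}^{T} e^{−i(t/T)A(mt/T)} e^{−i(t/T)B(mt/T)} converges in operator norm as T → ∞ to the time-ordered exponential 𝒯exp(−i∫_0^t (A(s)+B(s)) ds), i.e. to the solution U(t) of U'(t) = −i(A(t)+B(t))U(t), U(0) = I. -/

import Mathlib

open scoped BigOperators
open Filter

section TrotterAux

open NormedSpace

variable {𝔸 : Type*} [NormedRing 𝔸] [NormedAlgebra ℂ 𝔸] [CompleteSpace 𝔸]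

private lemma trot_norm_pow_le (X : 𝔸) (h1 : ‖(1:𝔸)‖ ≤ 1) (n : ℕ) : ‖X ^ n‖ ≤ ‖X‖ ^ n := by
  cases n with
  | zero => simpa using h1
  | succ m => exact norm_pow_le' X m.succ_pos

private lemma trot_term_bound (X : 𝔸) (h1 : ‖(1:𝔸)‖ ≤ 1) (n : ℕ) :
    ‖((n.factorial : ℂ))⁻¹ • X ^ n‖ ≤ ‖X‖ ^ n / n.factorial := by
  rw [norm_smul, norm_inv, Complex.norm_natCast, div_eq_inv_mul]
  gcongr
  exact trot_norm_pow_le X h1 n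

private lemma trot_norm_exp_le (X : 𝔸) (h1 : ‖(1:𝔸)‖ ≤ 1) : ‖exp X‖ ≤ Real.exp ‖X‖ := by
  rw [exp_eq_tsum (𝕂 := ℂ)]
  calc ‖∑' n : ℕ, ((n.factorial : ℂ))⁻¹ • X ^ n‖
      ≤ ∑' n : ℕ, ‖((n.factorial : ℂ))⁻¹ • X ^ n‖ :=
        norm_tsum_le_tsum_norm (norm_expSeries_summable' X)
    _ ≤ ∑' n : ℕ, ‖X‖ ^ n / n.factorial := by
        refine Summable.tsum_le_tsum (fun n => trot_term_bound X h1 n) (norm_expSeries_summable' X) ?_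
        exact Real.summable_pow_div_factorial _
    _ = Real.exp ‖X‖ := by
        rw [Real.exp_eq_exp_ℝ, exp_eq_tsum_div]

private lemma trot_two_pow_le_fac (n : ℕ) : (2:ℕ) ^ n ≤ (n+2).factorial := by
  have h1 : (1:ℕ).factorial * (1+1) ^ n ≤ (1 + n).factorial :=
    Nat.factorial_mul_pow_le_factorial
  simp only [Nat.factorial_one, one_mul] at h1
  calc (2:ℕ)^n ≤ (1+n).factorial := h1
    _ ≤ (n+2).factorial := Nat.factorial_le (by omega)

set_option maxHeartbeats 1000000 in
private lemma trot_exp_sub_bound (X : 𝔸) (h1 : ‖(1:𝔸)‖ ≤ 1) (hX : ‖X‖ ≤ 1) :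
    ‖exp X - 1 - X‖ ≤ 2 * ‖X‖ ^ 2 := by
  have hs : Summable (fun n : ℕ => ((n.factorial : ℂ))⁻¹ • X ^ n) := expSeries_summable' X
  have hs1 : Summable (fun n : ℕ => (((n+1).factorial : ℂ))⁻¹ • X ^ (n+1)) :=
    (summable_nat_add_iff 1).mpr hs
  have hrep : exp X - 1 - X = ∑' n : ℕ, (((n+2).factorial : ℂ))⁻¹ • X ^ (n+2) := by
    rw [exp_eq_tsum (𝕂 := ℂ)]
    beta_reduce
    rw [Summable.tsum_eq_zero_add hs, Summable.tsum_eq_zero_add hs1]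
    simp [Nat.factorial]
  rw [hrep]
  have hterm : ∀ n : ℕ, ‖(((n+2).factorial : ℂ))⁻¹ • X ^ (n+2)‖ ≤ ‖X‖^2 * (1/2)^n := by
    intro n
    rw [norm_smul, norm_inv, Complex.norm_natCast]
    have hb : ‖X ^ (n+2)‖ ≤ ‖X‖^2 := by
      calc ‖X ^ (n+2)‖ ≤ ‖X‖^(n+2) := trot_norm_pow_le X h1 _
        _ = ‖X‖^2 * ‖X‖^n := by ring
        _ ≤ ‖X‖^2 * 1 :=
            mul_le_mul_of_nonneg_left (pow_le_one₀ (norm_nonneg _) hX) (by positivity)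
        _ = ‖X‖^2 := mul_one _
    have hfac : ((1:ℝ)/2)^n ≥ ((n+2).factorial : ℝ)⁻¹ := by
      rw [ge_iff_le, div_pow, one_pow, one_div]
      exact inv_anti₀ (by positivity) (by exact_mod_cast trot_two_pow_le_fac n)
    calc ((n+2).factorial : ℝ)⁻¹ * ‖X ^ (n+2)‖ ≤ ((n+2).factorial : ℝ)⁻¹ * ‖X‖^2 :=
          mul_le_mul_of_nonneg_left hb (by positivity)
      _ ≤ (1/2)^n * ‖X‖^2 := mul_le_mul_of_nonneg_right hfac (by positivity)
      _ = ‖X‖^2 * (1/2)^n := mul_comm _ _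
  have hsum2 : Summable (fun n : ℕ => ‖X‖^2 * ((1:ℝ)/2)^n) :=
    (summable_geometric_of_lt_one (by norm_num) (by norm_num)).mul_left _
  calc ‖∑' n : ℕ, (((n+2).factorial : ℂ))⁻¹ • X ^ (n+2)‖
      ≤ ∑' n : ℕ, ‖(((n+2).factorial : ℂ))⁻¹ • X ^ (n+2)‖ :=
        norm_tsum_le_tsum_norm ((summable_nat_add_iff 2).mpr (norm_expSeries_summable' X))
    _ ≤ ∑' n : ℕ, ‖X‖^2 * ((1:ℝ)/2)^n :=
        Summable.tsum_le_tsum hterm ((summable_nat_add_iff 2).mpr (norm_expSeries_summable' X)) hsum2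
    _ = ‖X‖^2 * (1/(1-1/2)) := by
        rw [tsum_mul_left, tsum_geometric_of_lt_one (by norm_num) (by norm_num)]
        norm_num
    _ = 2 * ‖X‖^2 := by ring

private lemma trot_step (X Y : 𝔸) (h1 : ‖(1:𝔸)‖ ≤ 1) (m : ℝ) (hX : ‖X‖ ≤ m) (hY : ‖Y‖ ≤ m)
    (hm : m ≤ 1) : ‖exp X * exp Y - 1 - X - Y‖ ≤ 11 * m ^ 2 := by
  have hm0 : 0 ≤ m := (norm_nonneg X).trans hX
  have hX1 : ‖X‖ ≤ 1 := hX.trans hm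
  have hY1 : ‖Y‖ ≤ 1 := hY.trans hm
  have hid : exp X * exp Y - 1 - X - Y
      = (exp Y - 1 - Y) + X * (exp Y - 1) + (exp X - 1 - X) * exp Y := by
    noncomm_ring
  have hrY : ‖exp Y - 1 - Y‖ ≤ 2 * m ^ 2 :=
    (trot_exp_sub_bound Y h1 hY1).trans
      (mul_le_mul_of_nonneg_left (pow_le_pow_left₀ (norm_nonneg _) hY 2) (by norm_num))
  have hrX : ‖exp X - 1 - X‖ ≤ 2 * m ^ 2 :=
    (trot_exp_sub_bound X h1 hX1).trans
      (mul_le_mul_of_nonneg_left (pow_le_pow_left₀ (norm_nonneg _) hX 2) (by norm_num))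
  have heY : ‖exp Y‖ ≤ 3 := by
    refine (trot_norm_exp_le Y h1).trans ?_
    calc Real.exp ‖Y‖ ≤ Real.exp 1 := Real.exp_le_exp.mpr hY1
      _ ≤ 3 := by
        have := Real.exp_one_lt_d9
        linarith
  have heY1 : ‖exp Y - 1‖ ≤ m + 2 * m ^ 2 := by
    have : exp Y - 1 = (exp Y - 1 - Y) + Y := by abel
    rw [this]
    exact (norm_add_le _ _).trans (by linarith)
  calc ‖exp X * exp Y - 1 - X - Y‖
      ≤ ‖exp Y - 1 - Y‖ + ‖X‖ * ‖exp Y - 1‖ + ‖exp X - 1 - X‖ * ‖exp Y‖ := by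
        rw [hid]
        exact (norm_add_le _ _).trans (add_le_add
          ((norm_add_le _ _).trans (add_le_add le_rfl (norm_mul_le _ _))) (norm_mul_le _ _))
    _ ≤ 11 * m ^ 2 := by
        nlinarith [mul_le_mul hX heY1 (norm_nonneg _) hm0,
          mul_le_mul hrX heY (norm_nonneg _) (by positivity : (0:ℝ) ≤ 2 * m ^ 2),
          sq_nonneg m, hm0, hm]

private lemma trot_prod_bound (Ef u : ℕ → 𝔸) (c ε : ℝ) (hc : 1 ≤ c) (hε : 0 ≤ ε) :
    ∀ n : ℕ, (∀ k < n, ‖Ef k‖ ≤ c) → (∀ k < n, ‖u (k+1) - Ef k * u k‖ ≤ ε) →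
    ‖u n - ((List.range n).reverse.map Ef).prod * u 0‖ ≤ n * c^n * ε := by
  intro n
  induction n with
  | zero => simp
  | succ n ih =>
    intro hE hD
    have hP : ((List.range (n+1)).reverse.map Ef).prod
        = Ef n * ((List.range n).reverse.map Ef).prod := by
      simp [List.range_succ]
    have h1 : ‖u n - ((List.range n).reverse.map Ef).prod * u 0‖ ≤ n * c^n * ε :=
      ih (fun k hk => hE k (by omega)) (fun k hk => hD k (by omega))
    have h2 : ‖u (n+1) - Ef n * u n‖ ≤ ε := hD n (by omega)
    have h3 : ‖Ef n‖ ≤ c := hE n (by omega)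
    have key : u (n+1) - ((List.range (n+1)).reverse.map Ef).prod * u 0
        = (u (n+1) - Ef n * u n) + Ef n * (u n - ((List.range n).reverse.map Ef).prod * u 0) := by
      rw [hP, mul_sub, mul_assoc]; abel
    rw [key]
    have hcn : (1:ℝ) ≤ c^n := one_le_pow₀ hc
    calc ‖(u (n+1) - Ef n * u n) + Ef n * (u n - ((List.range n).reverse.map Ef).prod * u 0)‖
        ≤ ‖u (n+1) - Ef n * u n‖ + ‖Ef n‖ * ‖u n - ((List.range n).reverse.map Ef).prod * u 0‖ :=
          (norm_add_le _ _).trans (by gcongr; exact norm_mul_le _ _)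
      _ ≤ ε + c * (n * c^n * ε) :=
          add_le_add h2 (mul_le_mul h3 h1 (norm_nonneg _) (le_trans zero_le_one hc))
      _ ≤ ((n:ℝ)+1) * c^(n+1) * ε := by
          have e1 : ε ≤ c^(n+1) * ε := le_mul_of_one_le_left hε (one_le_pow₀ hc)
          rw [pow_succ]
          nlinarith [e1, pow_succ c n]
      _ = ((n+1:ℕ):ℝ) * c^(n+1) * ε := by push_cast; ring

end TrotterAux

private lemma trot_grid_mem (t : ℝ) (T k : ℕ) (hT : 0 < T) (hk : k ≤ T) :
    ((k : ℝ) * t / T) ∈ Set.uIcc 0 t := by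
  have hT' : (0:ℝ) < T := by exact_mod_cast hT
  have hk' : (k:ℝ) ≤ T := by exact_mod_cast hk
  have hk0 : (0:ℝ) ≤ k := Nat.cast_nonneg k
  rcases le_total 0 t with h | h
  · rw [Set.uIcc_of_le h]
    refine ⟨by positivity, ?_⟩
    rw [div_le_iff₀ hT']
    nlinarith
  · rw [Set.uIcc_of_ge h]
    refine ⟨?_, ?_⟩
    · rw [le_div_iff₀ hT']
      nlinarith
    · exact div_nonpos_of_nonpos_of_nonneg (mul_nonpos_of_nonneg_of_nonpos hk0 h) hT'.le

private lemma trot_abs_mem (a b x : ℝ) (hx : x ∈ Set.uIcc a b) :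
    |x - b| ≤ |b - a| ∧ |x - a| ≤ |b - a| := by
  rcases le_total a b with hab | hab
  · rw [Set.uIcc_of_le hab] at hx
    obtain ⟨hx1, hx2⟩ := hx
    have hba : |b - a| = b - a := abs_of_nonneg (by linarith)
    rw [hba]
    constructor <;> (rw [abs_le]; constructor <;> linarith)
  · rw [Set.uIcc_of_ge hab] at hx
    obtain ⟨hx1, hx2⟩ := hx
    have hba : |b - a| = a - b := by rw [abs_sub_comm]; exact abs_of_nonneg (by linarith)
    rw [hba]
    constructor <;> (rw [abs_le]; constructor <;> linarith)

private lemma trot_flat {α : Type*} (l : List ℕ) (g : ℝ → α) :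
    List.map g (l.flatMap fun a => [(a:ℝ)]) = List.map (fun k : ℕ => g k) l := by
  induction l with
  | nil => simp
  | cons a l ih => simp_all

set_option maxHeartbeats 2000000 in
/-- Trotter product convergence for bounded generators: the time-ordered
product `∏_{m=1}^{T} e^{−i(t/T)A(mt/T)} e^{−i(t/T)B(mt/T)}` (factor `m = T`
leftmost) converges in operator norm as `T → ∞` to the time-ordered exponential
`𝒯exp(−i∫_0^t (A(s)+B(s)) ds)`, i.e. to the solution `U` of
`U' = −i(A+B)U`, `U(0) = 1`, evaluated at `t`. -/
theorem stmt16 {E : Type*} [NormedAddCommGroup E] [NormedSpace ℂ E] [CompleteSpace E]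
    (t : ℝ) (A B : ℝ → E →L[ℂ] E) (hA : Continuous A) (hB : Continuous B)
    (U : ℝ → E →L[ℂ] E) (hU0 : U 0 = 1)
    (hU : ∀ s : ℝ, HasDerivAt U ((-Complex.I) • ((A s + B s).comp (U s))) s) :
    Tendsto (fun T : ℕ =>
        List.prod ((List.range T).reverse.map (fun k =>
          NormedSpace.exp ((-Complex.I * ((t : ℂ) / (T : ℂ))) • A (((k : ℝ) + 1) * t / T)) *
            NormedSpace.exp ((-Complex.I * ((t : ℂ) / (T : ℂ))) • B (((k : ℝ) + 1) * t / T)))))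
      atTop (nhds (U t)) := by
  classical
  have h1 : ‖(1 : E →L[ℂ] E)‖ ≤ 1 := by
    rw [ContinuousLinearMap.one_def]; exact ContinuousLinearMap.norm_id_le
  by_cases ht0 : t = 0
  · subst ht0
    have hconst : ∀ T : ℕ, (List.prod ((List.range T).reverse.map (fun k =>
        NormedSpace.exp ((-Complex.I * ((0:ℝ) / (T : ℂ))) • A (((k : ℝ) + 1) * 0 / T)) *
          NormedSpace.exp ((-Complex.I * ((0:ℝ) / (T : ℂ))) • B (((k : ℝ) + 1) * 0 / T)))))
        = 1 := by
      intro T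
      apply List.prod_eq_one
      intro x hx
      simp only [List.mem_map] at hx
      obtain ⟨k, -, rfl⟩ := hx
      norm_num [NormedSpace.exp_zero]
    rw [hU0]
    exact Tendsto.congr (fun T => (hconst T).symm) tendsto_const_nhds
  -- main case
  have hUd : Differentiable ℝ U := fun s => (hU s).differentiableAt
  have hUc : Continuous U := hUd.continuous
  set f : ℝ → E →L[ℂ] E := fun s => (-Complex.I) • ((A s + B s).comp (U s)) with hfdef
  have hfc : Continuous f := ((hA.add hB).clm_comp hUc).const_smul (-Complex.I)
  set F : ℝ × ℝ → E →L[ℂ] E :=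
    fun p => (-Complex.I) • ((A p.1 + B p.1).comp (U p.2)) with hFdef
  have hFc : Continuous F :=
    (((hA.comp continuous_fst).add (hB.comp continuous_fst)).clm_comp
      (hUc.comp continuous_snd)).const_smul (-Complex.I)
  set K := Set.uIcc (0:ℝ) t with hKdef
  have hKcp : IsCompact K := isCompact_uIcc
  obtain ⟨MA, hMA⟩ := hKcp.exists_bound_of_continuousOn hA.continuousOn
  obtain ⟨MB, hMB⟩ := hKcp.exists_bound_of_continuousOn hB.continuousOn
  obtain ⟨MU, hMU⟩ := hKcp.exists_bound_of_continuousOn hUc.continuousOn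
  set M : ℝ := max 1 (max MA (max MB MU)) with hMdef
  have hM1 : (1:ℝ) ≤ M := le_max_left _ _
  have hM0 : (0:ℝ) < M := lt_of_lt_of_le one_pos hM1
  have hMA' : ∀ s ∈ K, ‖A s‖ ≤ M := fun s hs => (hMA s hs).trans
    ((le_max_left _ _).trans (le_max_right _ _))
  have hMB' : ∀ s ∈ K, ‖B s‖ ≤ M := fun s hs => (hMB s hs).trans
    (((le_max_left _ _).trans (le_max_right _ _)).trans (le_max_right _ _))
  have hMU' : ∀ s ∈ K, ‖U s‖ ≤ M := fun s hs => (hMU s hs).trans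
    (((le_max_right _ _).trans (le_max_right _ _)).trans (le_max_right _ _))
  have hFuc : UniformContinuousOn F (K ×ˢ K) :=
    (hKcp.prod hKcp).uniformContinuousOn_of_continuous hFc.continuousOn
  rw [Metric.uniformContinuousOn_iff] at hFuc
  rw [Metric.tendsto_atTop]
  intro ε hε
  set C : ℝ := Real.exp (2 * M * |t|) with hCdef
  have hC1 : (1:ℝ) ≤ C := Real.one_le_exp (by positivity)
  have hC0 : (0:ℝ) < C := lt_of_lt_of_le one_pos hC1
  set ε₁ : ℝ := ε / (4 * C * (|t| + 1)) with hε₁def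
  have hε₁0 : 0 < ε₁ := by
    apply div_pos hε
    positivity
  obtain ⟨δ, hδ0, hδ⟩ := hFuc ε₁ hε₁0
  obtain ⟨N, hN⟩ := exists_nat_gt (max (|t| / δ) (max (M * |t|)
    (11 * M^3 * t^2 * (4 * C) / ε)))
  refine ⟨N + 1, fun T hT => ?_⟩
  have hTpos : 0 < T := by omega
  have hTR : (N:ℝ) ≤ T := by exact_mod_cast (by omega : N ≤ T)
  have hTδ : |t| / δ < T := lt_of_le_of_lt (le_max_left _ _) (hN.trans_le hTR)
  have hTM : M * |t| < T := lt_of_le_of_lt ((le_max_left _ _).trans (le_max_right _ _))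
    (hN.trans_le hTR)
  have hTε : 11 * M^3 * t^2 * (4 * C) / ε < T :=
    lt_of_le_of_lt ((le_max_right _ _).trans (le_max_right _ _)) (hN.trans_le hTR)
  have hT0 : (0:ℝ) < T := by exact_mod_cast hTpos
  set h : ℝ := |t| / T with hhdef
  have hh0 : 0 < h := div_pos (abs_pos.mpr ht0) hT0
  have hhM : M * h ≤ 1 := by
    rw [hhdef, ← mul_div_assoc, div_le_one hT0]
    exact hTM.le
  have hhδ : h < δ := by
    rw [hhdef, div_lt_iff₀ hT0]
    rw [div_lt_iff₀ hδ0] at hTδ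
    nlinarith
  set s : ℕ → ℝ := fun k => (k : ℝ) * t / T with hsdef
  have hsK : ∀ k ≤ T, s k ∈ K := fun k hk => trot_grid_mem t T k hTpos hk
  have hstep : ∀ k : ℕ, s (k+1) - s k = t / T := by
    intro k
    show ((k:ℕ)+1 : ℕ) * t / (T:ℝ) - (k : ℝ) * t / T = t / T
    push_cast
    field_simp
    ring
  have habsstep : ∀ k : ℕ, |s (k+1) - s k| = h := by
    intro k
    rw [hstep k, hhdef, abs_div, Nat.abs_cast]
  set c : ℂ := -Complex.I * ((t : ℂ) / (T : ℂ)) with hcdef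
  have hcnorm : ‖c‖ = h := by
    rw [hcdef, hhdef, norm_mul, norm_neg, Complex.norm_I, one_mul, norm_div,
      Complex.norm_real, Real.norm_eq_abs, Complex.norm_natCast]
  set Ef : ℕ → E →L[ℂ] E := fun k =>
    NormedSpace.exp (c • A (s (k+1))) * NormedSpace.exp (c • B (s (k+1))) with hEfdef
  set u : ℕ → E →L[ℂ] E := fun k => U (s k) with hudef
  -- match with the statement's expression
  have hmatch : (List.range T).reverse.map (fun k =>
      NormedSpace.exp ((-Complex.I * ((t : ℂ) / (T : ℂ))) • A (((k : ℝ) + 1) * t / T)) *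
        NormedSpace.exp ((-Complex.I * ((t : ℂ) / (T : ℂ))) • B (((k : ℝ) + 1) * t / T)))
      = (List.range T).reverse.map Ef := by
    simp only [List.bind_eq_flatMap, List.pure_def]
    rw [show ∀ (l : List ℕ) (g : ℝ → E →L[ℂ] E), List.map g (List.flatMap (fun a : ℕ => [(a:ℝ)]) l)
        = List.map (fun k : ℕ => g k) l from fun l g => by
      induction l with
      | nil => simp
      | cons a l ih => simp_all]
    apply List.map_congr_left
    intro k _
    have he : ((k : ℝ) + 1) * t / T = s (k+1) := by
      rw [hsdef]; push_cast; ring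
    rw [he, hEfdef]
  have hXbound : ∀ k < T, ‖c • A (s (k+1))‖ ≤ M * h := by
    intro k hk
    rw [norm_smul c (A (s (k+1))), hcnorm, mul_comm]
    exact mul_le_mul_of_nonneg_right (hMA' _ (hsK (k+1) (by omega))) hh0.le
  have hYbound : ∀ k < T, ‖c • B (s (k+1))‖ ≤ M * h := by
    intro k hk
    rw [norm_smul c (B (s (k+1))), hcnorm, mul_comm]
    exact mul_le_mul_of_nonneg_right (hMB' _ (hsK (k+1) (by omega))) hh0.le
  have hE : ∀ k < T, ‖Ef k‖ ≤ Real.exp (2 * M * h) := by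
    intro k hk
    calc ‖Ef k‖ ≤ ‖NormedSpace.exp (c • A (s (k+1)))‖ *
          ‖NormedSpace.exp (c • B (s (k+1)))‖ := norm_mul_le _ _
      _ ≤ Real.exp ‖c • A (s (k+1))‖ * Real.exp ‖c • B (s (k+1))‖ :=
          mul_le_mul (trot_norm_exp_le _ h1) (trot_norm_exp_le _ h1)
            (norm_nonneg _) (Real.exp_nonneg _)
      _ ≤ Real.exp (M * h) * Real.exp (M * h) :=
          mul_le_mul (Real.exp_le_exp.mpr (hXbound k hk)) (Real.exp_le_exp.mpr (hYbound k hk))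
            (Real.exp_nonneg _) (Real.exp_nonneg _)
      _ = Real.exp (2 * M * h) := by rw [← Real.exp_add]; ring_nf
  -- per-step error
  have hD : ∀ k < T, ‖u (k+1) - Ef k * u k‖ ≤ h * ε₁ + 11 * (M * h)^2 * M := by
    intro k hk
    set X : E →L[ℂ] E := c • A (s (k+1)) with hXdef
    set Y : E →L[ℂ] E := c • B (s (k+1)) with hYdef
    have hR : ‖Ef k - 1 - X - Y‖ ≤ 11 * (M * h)^2 := by
      have : Ef k = NormedSpace.exp X * NormedSpace.exp Y := rfl
      rw [this]
      exact trot_step X Y h1 (M * h) (hXbound k hk) (hYbound k hk) hhM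
    have hsplit : u (k+1) - Ef k * u k
        = ((U (s (k+1)) - U (s k)) - (X + Y) * U (s k)) - (Ef k - 1 - X - Y) * U (s k) := by
      show U (s (k+1)) - Ef k * U (s k) = _
      noncomm_ring
    have hFTC : U (s (k+1)) - U (s k) = ∫ σ in (s k)..(s (k+1)), f σ :=
      (intervalIntegral.integral_eq_sub_of_hasDerivAt (fun σ _ => hU σ)
        (hfc.intervalIntegrable _ _)).symm
    have hconst : (X + Y) * U (s k) = ∫ σ in (s k)..(s (k+1)), F (s (k+1), s k) := by
      rw [intervalIntegral.integral_const, hstep k]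
      rw [hXdef, hYdef]
      have hWc : c • (A (s (k+1)) + B (s (k+1))) * U (s k)
          = c • ((A (s (k+1)) + B (s (k+1))) * U (s k)) := smul_mul_assoc _ _ _
      have hsum : c • A (s (k+1)) + c • B (s (k+1))
          = c • (A (s (k+1)) + B (s (k+1))) := (smul_add _ _ _).symm
      rw [hsum, hWc]
      have hcc : c = (((t / T : ℝ) : ℂ)) * (-Complex.I) := by
        rw [hcdef]
        push_cast
        ring
      rw [hcc, mul_smul, Complex.coe_smul]
      rw [hFdef]
      show (t / T : ℝ) • ((-Complex.I) • ((A (s (k+1)) + B (s (k+1))) * U (s k)))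
          = (t / T : ℝ) • ((-Complex.I) • ((A (s (k+1)) + B (s (k+1))).comp (U (s k))))
      rfl
    have hsub : (U (s (k+1)) - U (s k)) - (X + Y) * U (s k)
        = ∫ σ in (s k)..(s (k+1)), (f σ - F (s (k+1), s k)) := by
      rw [hFTC, hconst,
        intervalIntegral.integral_sub (hfc.intervalIntegrable _ _) intervalIntegrable_const]
    have hptwise : ∀ σ ∈ Set.uIoc (s k) (s (k+1)), ‖f σ - F (s (k+1), s k)‖ ≤ ε₁ := by
      intro σ hσ
      have hσcc : σ ∈ Set.uIcc (s k) (s (k+1)) := Set.uIoc_subset_uIcc hσ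
      have hσK : σ ∈ K :=
        Set.uIcc_subset_uIcc (hsK k (by omega)) (hsK (k+1) (by omega)) hσcc
      have habs := trot_abs_mem (s k) (s (k+1)) σ hσcc
      have hd1 : dist σ (s (k+1)) ≤ h := by
        rw [Real.dist_eq]
        exact (habs.1).trans_eq (habsstep k)
      have hd2 : dist σ (s k) ≤ h := by
        rw [Real.dist_eq]
        exact (habs.2).trans_eq (habsstep k)
      have hdist : dist ((σ, σ) : ℝ × ℝ) ((s (k+1), s k)) < δ := by
        rw [Prod.dist_eq]
        exact lt_of_le_of_lt (max_le hd1 hd2) hhδ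
      have := hδ (σ, σ) (Set.mk_mem_prod hσK hσK)
        ((s (k+1)), (s k)) (Set.mk_mem_prod (hsK (k+1) (by omega)) (hsK k (by omega))) hdist
      rw [dist_eq_norm] at this
      have hfF : f σ = F (σ, σ) := rfl
      rw [hfF]
      exact this.le
    have hint : ‖∫ σ in (s k)..(s (k+1)), (f σ - F (s (k+1), s k))‖ ≤ h * ε₁ := by
      have := intervalIntegral.norm_integral_le_of_norm_le_const hptwise
      rw [habsstep k] at this
      linarith [this]
    have hRU : ‖(Ef k - 1 - X - Y) * U (s k)‖ ≤ 11 * (M * h)^2 * M := by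
      calc ‖(Ef k - 1 - X - Y) * U (s k)‖ ≤ ‖Ef k - 1 - X - Y‖ * ‖U (s k)‖ := norm_mul_le _ _
        _ ≤ (11 * (M * h)^2) * M :=
            mul_le_mul hR (hMU' _ (hsK k (by omega))) (norm_nonneg _) (by positivity)
    calc ‖u (k+1) - Ef k * u k‖
        = ‖((U (s (k+1)) - U (s k)) - (X + Y) * U (s k)) - (Ef k - 1 - X - Y) * U (s k)‖ := by
          rw [hsplit]
      _ ≤ ‖(U (s (k+1)) - U (s k)) - (X + Y) * U (s k)‖ + ‖(Ef k - 1 - X - Y) * U (s k)‖ :=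
          norm_sub_le _ _
      _ ≤ h * ε₁ + 11 * (M * h)^2 * M := by
          rw [hsub]
          exact add_le_add hint hRU
  -- assemble
  have hcpow : Real.exp (2 * M * h) ^ T = C := by
    rw [← Real.exp_nat_mul, hCdef, hhdef]
    congr 1
    field_simp
  have hmain := trot_prod_bound Ef u (Real.exp (2 * M * h)) (h * ε₁ + 11 * (M * h)^2 * M)
    (Real.one_le_exp (by positivity)) (by positivity) T hE hD
  rw [hcpow] at hmain
  have huT : u T = U t := by
    show U ((T : ℝ) * t / T) = U t
    rw [show (T:ℝ) * t / T = t by field_simp]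
  have hu0 : u 0 = 1 := by
    show U (((0:ℕ) : ℝ) * t / T) = 1
    norm_num [hU0]
  rw [huT, hu0, mul_one] at hmain
  rw [dist_eq_norm, hmatch, ← norm_neg]
  have hneg : -(((List.range T).reverse.map Ef).prod - U t)
      = U t - ((List.range T).reverse.map Ef).prod := by abel
  rw [hneg]
  refine lt_of_le_of_lt hmain ?_
  -- final arithmetic
  have hTh : (T:ℝ) * h = |t| := by rw [hhdef]; field_simp
  have e : (T:ℝ) * C * (h * ε₁ + 11 * (M * h)^2 * M)
      = C * ((T:ℝ) * h) * ε₁ + 11 * M^3 * C * (((T:ℝ) * h) * h) := by ring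
  rw [e, hTh]
  have b1 : C * |t| * ε₁ ≤ ε / 4 := by
    rw [hε₁def, ← mul_div_assoc]
    rw [div_le_div_iff₀ (by positivity) (by norm_num : (0:ℝ) < 4)]
    nlinarith [abs_nonneg t, hC0, hε.le]
  have b2 : 11 * M^3 * C * (|t| * h) < ε / 4 := by
    rw [hhdef, ← mul_div_assoc, abs_mul_abs_self, ← mul_div_assoc]
    rw [div_lt_div_iff₀ hT0 (by norm_num : (0:ℝ) < 4)]
    rw [div_lt_iff₀ hε] at hTε
    nlinarith [hTε]
  linarith [b1, b2, hε]
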